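/- There exists a constant C > 0 such that for all x, h ∈ ℝ² with x ≠ 0 and |h| ≤ |x|/2, one has | x/|x| - (x+h)/|x+h| |² ≤ |h|²/|x|² - ⟨x, h⟩²/|x|⁴ + C |h|³/|x|³. -/

import Mathlib

set_option maxHeartbeats 1000000

open RealInnerProductSpace

lemma key13 (a b s t : ℝ) (ha : 0 < a) (hb0 : 0 ≤ b)
    (hb2 : b ^ 2 = a ^ 2 + 2 * t + s ^ 2) (ht : |t| ≤ a * s)
    (hs : 0 ≤ s) (hsa : s ≤ a / 2) :
    2 - 2 * ((a ^ 2 + t) / (a * b)) ≤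
      s ^ 2 / a ^ 2 - t ^ 2 / a ^ 4 + 10 * s ^ 3 / a ^ 3 := by
  obtain ⟨ht1, ht2⟩ := abs_le.mp ht
  have hba : a - s ≤ b := by nlinarith [sq_nonneg (b - (a - s))]
  have hb : 0 < b := by linarith
  have hE : 0 ≤ a ^ 2 * s ^ 2 - t ^ 2 := by nlinarith
  have hE2 : a ^ 2 * s ^ 2 - t ^ 2 ≤ a ^ 2 * s ^ 2 := by nlinarith [sq_nonneg t]
  have hD : 2 * a * (a - s) ≤ a * b + a ^ 2 + t := by nlinarith
  have hDpos : 0 < a * b + a ^ 2 + t := by nlinarith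
  have hkey : (a * b + a ^ 2 + t) * (a * b - (a ^ 2 + t)) = a ^ 2 * s ^ 2 - t ^ 2 := by
    have h : (a * b + a ^ 2 + t) * (a * b - (a ^ 2 + t)) = a ^ 2 * b ^ 2 - (a ^ 2 + t) ^ 2 := by
      ring
    rw [h, hb2]; ring
  have h3 : 2 * a * (a - s) * (a - s) * (a ^ 2 * s ^ 2 - t ^ 2)
      ≤ (a * b + a ^ 2 + t) * b * (a ^ 2 * s ^ 2 - t ^ 2) :=
    mul_le_mul_of_nonneg_right
      (mul_le_mul hD hba (by linarith) hDpos.le) hE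
  have h4 : a ^ 3 / 2 ≤ b * (a * b + a ^ 2 + t) := by nlinarith
  have h4' : 10 * a * s ^ 3 * (a ^ 3 / 2) ≤ 10 * a * s ^ 3 * (b * (a * b + a ^ 2 + t)) :=
    mul_le_mul_of_nonneg_left h4 (by positivity)
  have h5 : (a ^ 2 * s ^ 2 - t ^ 2) * (s * (2 * a - s)) ≤ a ^ 2 * s ^ 2 * (2 * a * s) :=
    mul_le_mul hE2 (by nlinarith) (by nlinarith) (by positivity)
  have h5' : 2 * a * ((a ^ 2 * s ^ 2 - t ^ 2) * (s * (2 * a - s)))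
      ≤ 2 * a * (a ^ 2 * s ^ 2 * (2 * a * s)) :=
    mul_le_mul_of_nonneg_left h5 (by positivity)
  have hmul : 2 * a ^ 3 * (a ^ 2 * s ^ 2 - t ^ 2)
      ≤ (a * b + a ^ 2 + t) * (b * (a ^ 2 * s ^ 2 - t ^ 2) + 10 * a * b * s ^ 3) := by
    nlinarith [h3, h4', h5', pow_nonneg hs 3, mul_nonneg (pow_nonneg ha.le 4) (pow_nonneg hs 3)]
  have lhs_eq : 2 - 2 * ((a ^ 2 + t) / (a * b))
      = 2 * (a ^ 2 * s ^ 2 - t ^ 2) / ((a * b + a ^ 2 + t) * (a * b)) := by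
    rw [← hkey]
    rw [mul_left_comm 2, mul_div_mul_left _ _ hDpos.ne']
    field_simp
  have rhs_eq : s ^ 2 / a ^ 2 - t ^ 2 / a ^ 4 + 10 * s ^ 3 / a ^ 3
      = (a ^ 2 * s ^ 2 - t ^ 2 + 10 * a * s ^ 3) / a ^ 4 := by
    field_simp
  rw [lhs_eq, rhs_eq, div_le_div_iff₀ (by positivity) (by positivity)]
  nlinarith [mul_le_mul_of_nonneg_left hmul ha.le]

theorem stmt_13 :
    ∃ C : ℝ, 0 < C ∧ ∀ x h : EuclideanSpace ℝ (Fin 2), x ≠ 0 → ‖h‖ ≤ ‖x‖ / 2 →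
      ‖‖x‖⁻¹ • x - ‖x + h‖⁻¹ • (x + h)‖ ^ 2 ≤
        ‖h‖ ^ 2 / ‖x‖ ^ 2 - ⟪x, h⟫ ^ 2 / ‖x‖ ^ 4 + C * ‖h‖ ^ 3 / ‖x‖ ^ 3 := by
  refine ⟨10, by norm_num, fun x h hx0 hh => ?_⟩
  have hx : 0 < ‖x‖ := norm_pos_iff.mpr hx0
  have hxh1 : ‖x‖ ≤ ‖x + h‖ + ‖h‖ := by
    calc ‖x‖ = ‖(x + h) + (-h)‖ := by rw [add_neg_cancel_right]
    _ ≤ ‖x + h‖ + ‖-h‖ := norm_add_le _ _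
    _ = ‖x + h‖ + ‖h‖ := by rw [norm_neg]
  have hb : 0 < ‖x + h‖ := by linarith
  have hb2 : ‖x + h‖ ^ 2 = ‖x‖ ^ 2 + 2 * ⟪x, h⟫ + ‖h‖ ^ 2 := norm_add_sq_real x h
  have ht : |⟪x, h⟫| ≤ ‖x‖ * ‖h‖ := abs_real_inner_le_norm x h
  have hnorm : ‖‖x‖⁻¹ • x - ‖x + h‖⁻¹ • (x + h)‖ ^ 2
      = 2 - 2 * ((‖x‖ ^ 2 + ⟪x, h⟫) / (‖x‖ * ‖x + h‖)) := by
    rw [norm_sub_sq_real]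
    rw [real_inner_smul_left, real_inner_smul_right]
    rw [inner_add_right, real_inner_self_eq_norm_sq]
    rw [norm_smul, norm_smul]
    rw [norm_inv, norm_norm, norm_inv, norm_norm]
    field_simp
    ring
  rw [hnorm]
  have hfin := key13 ‖x‖ ‖x + h‖ ‖h‖ ⟪x, h⟫ hx hb.le hb2 ht (norm_nonneg h) hh
  linarith [hfin]
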